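/- Let p be a prime, k ≥ 1 an integer, and let v₁, …, v_{k(p−1)} be a sequence of k(p−1) vectors in Z_p^k, writing v_i = (v_i(1), …, v_i(k)). Suppose that ∑_{(I₁,…,I_k) ∈ 𝓘} ∏_{i∈[k]} ∏_{j∈I_i} v_j(i) ≠ 0 in Z_p, where 𝓘 is the collection of all partitions of the index set [k(p−1)] into k parts I₁, …, I_k each of size p−1. Then the sumset of the multiset {v₁, …, v_{k(p−1)}} equals all of Z_p^k, i.e., every element of Z_p^k is a sum of some subset of the v_i's. -/

import Mathlib

set_option linter.unusedSectionVars false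
set_option linter.unusedVariables false
set_option linter.unnecessarySimpa false
set_option maxHeartbeats 1000000

open Finset MvPolynomial

namespace SumsetAux

variable {ι : Type*} [Fintype ι] [DecidableEq ι] {R : Type*} [CommRing R]

noncomputable def ind (I : Finset ι) : ι →₀ ℕ := ∑ j ∈ I, Finsupp.single j 1

lemma ind_apply (I : Finset ι) (j : ι) : ind I j = if j ∈ I then 1 else 0 := by
  classical
  simp [ind, Finsupp.finset_sum_apply, Finsupp.single_apply, Finset.sum_ite_eq, eq_comm]

lemma ind_empty : ind (∅ : Finset ι) = 0 := by simp [ind]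

lemma ind_eq_zero_iff {I : Finset ι} : ind I = 0 ↔ I = ∅ := by
  constructor
  · intro h
    by_contra hne
    obtain ⟨j, hj⟩ := Finset.nonempty_iff_ne_empty.2 hne
    have := congrArg (fun d : ι →₀ ℕ => d j) h
    simp [ind_apply, hj] at this
  · rintro rfl; exact ind_empty

lemma support_ind (I : Finset ι) : (ind I).support = I := by
  ext j
  simp only [Finsupp.mem_support_iff, ind_apply]
  split <;> simp_all

lemma ind_singleton (j : ι) : ind ({j} : Finset ι) = Finsupp.single j 1 := by
  simp [ind]

lemma ind_add_sdiff {A I : Finset ι} (h : A ⊆ I) : ind A + ind (I \ A) = ind I := by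
  ext j
  simp only [Finsupp.add_apply, ind_apply, Finset.mem_sdiff]
  by_cases hA : j ∈ A
  · simp [hA, h hA]
  · simp [hA]

/-- L1: coefficient of a squarefree monomial in a product. -/
lemma coeff_mul_ind (I : Finset ι) (Q Q' : MvPolynomial ι R) :
    MvPolynomial.coeff (ind I) (Q * Q') =
      ∑ A ∈ I.powerset, MvPolynomial.coeff (ind A) Q * MvPolynomial.coeff (ind (I \ A)) Q' := by
  rw [MvPolynomial.coeff_mul]
  have key : ∀ d : (ι →₀ ℕ) × (ι →₀ ℕ), d ∈ Finset.HasAntidiagonal.antidiagonal (ind I) →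
      ∀ j, d.1 j + d.2 j = if j ∈ I then 1 else 0 := by
    rintro ⟨d₁, d₂⟩ hd j
    rw [Finset.HasAntidiagonal.mem_antidiagonal] at hd
    have := congrArg (fun d : ι →₀ ℕ => d j) hd
    simpa [ind_apply] using this
  have main : ∀ d : (ι →₀ ℕ) × (ι →₀ ℕ), d ∈ Finset.HasAntidiagonal.antidiagonal (ind I) →
      ind d.1.support = d.1 ∧ ind (I \ d.1.support) = d.2 := by
    rintro ⟨d₁, d₂⟩ hd
    constructor
    · ext j
      have := key _ hd j
      simp only [ind_apply, Finsupp.mem_support_iff, ne_eq, ite_not] at this ⊢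
      split_ifs at this ⊢ <;> omega
    · ext j
      have h := key _ hd j
      simp only [ind_apply, Finset.mem_sdiff, Finsupp.mem_support_iff, ne_eq, not_not] at h ⊢
      by_cases hjI : j ∈ I
      · by_cases h0 : d₁ j = 0 <;> simp only [hjI, h0, true_and, and_true, and_false,
          if_true, if_false, not_true, not_false_iff] at h ⊢ <;> omega
      · simp only [hjI, false_and, if_false] at h ⊢
        omega
  refine Finset.sum_bij' (fun d _ => (d.1.support : Finset ι)) (fun A _ => (ind A, ind (I \ A)))
    ?_ ?_ ?_ ?_ ?_
  · rintro d hd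
    rw [Finset.mem_powerset]
    intro j hj
    rw [Finsupp.mem_support_iff] at hj
    have := key d hd j
    by_contra hjI
    simp only [hjI, if_false] at this
    omega
  · intro A hA
    rw [Finset.HasAntidiagonal.mem_antidiagonal]
    exact ind_add_sdiff (Finset.mem_powerset.1 hA)
  · rintro d hd
    obtain ⟨h1, h2⟩ := main d hd
    exact Prod.ext h1 h2
  · intro A hA
    simp [support_ind]
  · rintro d hd
    obtain ⟨h1, h2⟩ := main d hd
    rw [h1, h2]


/-- The affine form `∑ c j X j + c0`. -/
noncomputable def aff (c : ι → R) (c0 : R) : MvPolynomial ι R :=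
  (∑ j, C (c j) * X j) + C c0

lemma coeff_aff_empty (c : ι → R) (c0 : R) : coeff (ind (∅ : Finset ι)) (aff c c0) = c0 := by
  rw [ind_empty]
  simp [aff, coeff_sum, coeff_X', Finsupp.single_eq_zero]

lemma coeff_aff_singleton (c : ι → R) (c0 : R) (j : ι) :
    coeff (ind ({j} : Finset ι)) (aff c c0) = c j := by
  rw [ind_singleton]
  simp only [aff, coeff_add, coeff_sum, coeff_C_mul, coeff_X', coeff_C]
  rw [Finset.sum_eq_single j]
  · rw [if_pos rfl, if_neg (fun h => (by simpa [Finsupp.single_eq_zero] using h.symm : False).elim)]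
    ring
  · intro b _ hb
    simp [Finsupp.single_eq_single_iff, hb]
  · simp

lemma coeff_aff_big (c : ι → R) (c0 : R) {B : Finset ι} (hB : 2 ≤ B.card) :
    coeff (ind B) (aff c c0) = 0 := by
  have hs : ∀ j : ι, Finsupp.single j 1 ≠ ind B := by
    intro j h
    have := congrArg Finsupp.support h
    rw [Finsupp.support_single_ne_zero j one_ne_zero, support_ind] at this
    rw [← this] at hB
    simp at hB
  have h0 : ind B ≠ 0 := by
    rw [ne_eq, ind_eq_zero_iff]
    intro h; rw [h] at hB; simp at hB
  simp only [aff, coeff_add, coeff_sum, coeff_C_mul, coeff_X', coeff_C]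
  rw [if_neg (fun h => h0 h.symm), add_zero]
  exact Finset.sum_eq_zero fun j _ => by rw [if_neg (hs j), mul_zero]

lemma descFactorial_rec (m t : ℕ) (htm : t ≤ m) :
    (m + 1).descFactorial (t + 1)
      = m.descFactorial (t + 1) + (t + 1) * m.descFactorial t := by
  rw [Nat.succ_descFactorial_succ, Nat.descFactorial_succ]
  have h : m + 1 = (m - t) + (t + 1) := by omega
  rw [h, add_mul]

/-- L2: coefficient of a squarefree monomial in a power of an affine form. -/
lemma coeff_aff_pow (c : ι → R) (c0 : R) (m : ℕ) (I : Finset ι) :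
    coeff (ind I) ((aff c c0) ^ m) =
      (m.descFactorial I.card : R) * c0 ^ (m - I.card) * ∏ j ∈ I, c j := by
  induction m generalizing I with
  | zero =>
    rcases Finset.eq_empty_or_nonempty I with rfl | hI
    · simp [ind_empty, coeff_one]
    · have h0 : ind I ≠ 0 := by
        rw [ne_eq, ind_eq_zero_iff]; exact Finset.nonempty_iff_ne_empty.1 hI
      have hc : I.card ≠ 0 := by simpa [Finset.card_eq_zero] using Finset.nonempty_iff_ne_empty.1 hI
      rw [pow_zero, coeff_one, if_neg (fun h => h0 h.symm)]
      rw [Nat.descFactorial_eq_zero_iff_lt.2 (by omega)]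
      simp
  | succ m ih =>
    rw [pow_succ, coeff_mul_ind]
    set f : Finset ι → R :=
      fun A => coeff (ind A) (aff c c0 ^ m) * coeff (ind (I \ A)) (aff c c0) with hf
    have hTsub : insert I (I.image I.erase) ⊆ I.powerset := by
      intro A hA
      simp only [Finset.mem_insert, Finset.mem_image] at hA
      rw [Finset.mem_powerset]
      rcases hA with rfl | ⟨j, hj, rfl⟩
      · exact Finset.Subset.refl _
      · exact Finset.erase_subset _ _
    have hzero : ∀ A ∈ I.powerset, A ∉ insert I (I.image I.erase) → f A = 0 := by
      intro A hA hA'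
      rw [Finset.mem_powerset] at hA
      simp only [Finset.mem_insert, Finset.mem_image, not_or, not_exists] at hA'
      obtain ⟨hAI, herase⟩ := hA'
      have h2 : 2 ≤ (I \ A).card := by
        by_contra h
        push_neg at h
        interval_cases h' : (I \ A).card
        · rw [Finset.card_eq_zero, Finset.sdiff_eq_empty_iff_subset] at h'
          exact hAI (Finset.Subset.antisymm hA h')
        · rw [Finset.card_eq_one] at h'
          obtain ⟨j, hj⟩ := h'
          have hjI : j ∈ I := by
            have := hj ▸ Finset.mem_singleton_self j
            exact (Finset.mem_sdiff.1 this).1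
          refine herase j ⟨hjI, ?_⟩
          have hrw : A = I \ (I \ A) := (Finset.sdiff_sdiff_eq_self hA).symm
          rw [hrw, hj, Finset.sdiff_singleton_eq_erase]
      rw [hf]
      simp only
      rw [coeff_aff_big c c0 h2, mul_zero]
    rw [(Finset.sum_subset hTsub (fun A hA hA' => hzero A hA hA')).symm]
    have hInot : I ∉ I.image I.erase := by
      intro h
      obtain ⟨j, hj, he⟩ := Finset.mem_image.1 h
      have h1 := Finset.card_erase_of_mem hj
      rw [he] at h1
      have h2 : 0 < I.card := Finset.card_pos.2 ⟨j, hj⟩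
      omega
    rw [Finset.sum_insert hInot,
      Finset.sum_image (fun a ha b hb hab => Finset.erase_injOn I (by simpa using ha)
        (by simpa using hb) hab)]
    have hfI : f I = (m.descFactorial I.card : R) * c0 ^ (m - I.card) * (∏ j ∈ I, c j) * c0 := by
      rw [hf]
      simp only
      rw [Finset.sdiff_self, coeff_aff_empty, ih]
    have hfe : ∀ j ∈ I, f (I.erase j) =
        (m.descFactorial (I.card - 1) : R) * c0 ^ (m - (I.card - 1)) *
          ((∏ j' ∈ I.erase j, c j') * c j) := by
      intro j hj
      rw [hf]
      simp only
      rw [Finset.sdiff_erase_self hj, coeff_aff_singleton, ih, Finset.card_erase_of_mem hj,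
        mul_assoc]
    rw [hfI, Finset.sum_congr rfl hfe]
    have hsum2 : ∑ j ∈ I, (m.descFactorial (I.card - 1) : R) * c0 ^ (m - (I.card - 1)) *
          ((∏ j' ∈ I.erase j, c j') * c j)
        = (I.card : R) * ((m.descFactorial (I.card - 1) : R) * c0 ^ (m - (I.card - 1)) *
            ∏ j ∈ I, c j) := by
      rw [Finset.sum_congr rfl (fun j hj => by rw [Finset.prod_erase_mul _ _ hj])]
      rw [Finset.sum_const, nsmul_eq_mul]
    rw [hsum2]
    rcases Nat.eq_zero_or_pos I.card with hs | hs
    · rw [hs]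
      simp only [Nat.descFactorial_zero, Nat.cast_one, Nat.sub_zero, Nat.cast_zero]
      ring
    rcases Nat.lt_or_ge m.succ I.card with hbig | hle
    · rw [show ((m + 1).descFactorial I.card) = 0 from
          Nat.descFactorial_eq_zero_iff_lt.2 (by omega),
        show (m.descFactorial I.card) = 0 from
          Nat.descFactorial_eq_zero_iff_lt.2 (by omega),
        show (m.descFactorial (I.card - 1)) = 0 from
          Nat.descFactorial_eq_zero_iff_lt.2 (by omega)]
      simp
    rcases Nat.lt_or_ge m I.card with heq | hle'
    · -- I.card = m + 1
      have hcard : I.card = m + 1 := by omega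
      rw [hcard, Nat.descFactorial_eq_zero_iff_lt.2 (show m < m + 1 by omega),
        Nat.succ_descFactorial_succ, Nat.add_sub_cancel, Nat.descFactorial_self,
        Nat.sub_self, show m + 1 - (m + 1) = 0 from by omega,
        show m - (m + 1) = 0 from by omega]
      push_cast
      ring
    · -- I.card ≤ m
      have ht : I.card - 1 + 1 = I.card := by omega
      have hdf := descFactorial_rec m (I.card - 1) (by omega)
      rw [ht] at hdf
      rw [hdf, show m + 1 - I.card = m - I.card + 1 from by omega,
        show m - (I.card - 1) = m - I.card + 1 from by omega]
      push_cast
      ring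

variable {κ : Type*} [Fintype κ] [DecidableEq κ]

/-- L4': coefficient of a squarefree monomial in a finite product of polynomials,
expanded over "colourings" of the index set. -/
lemma coeff_prod_ind (i₀ : κ) (Q : κ → MvPolynomial ι R) (s : Finset κ) (I : Finset ι) :
    coeff (ind I) (∏ i ∈ s, Q i) =
      ∑ f ∈ Finset.univ.filter (fun f : ι → κ =>
          (∀ j ∈ I, f j ∈ s) ∧ ∀ j ∉ I, f j = i₀),
        ∏ i ∈ s, coeff (ind (I.filter (fun j => f j = i))) (Q i) := by
  induction s using Finset.cons_induction generalizing I with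
  | empty =>
    rcases Finset.eq_empty_or_nonempty I with rfl | ⟨j0, hj0⟩
    · have hfil : Finset.univ.filter (fun f : ι → κ =>
          (∀ j ∈ (∅ : Finset ι), f j ∈ (∅ : Finset κ)) ∧ ∀ j ∉ (∅ : Finset ι), f j = i₀)
          = {fun _ => i₀} := by
        ext f
        simp [funext_iff]
      rw [hfil, Finset.prod_empty, ind_empty]
      simp
    · have h0 : ind I ≠ 0 := by
        rw [ne_eq, ind_eq_zero_iff]
        exact Finset.Nonempty.ne_empty ⟨j0, hj0⟩
      have hfil : Finset.univ.filter (fun f : ι → κ =>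
          (∀ j ∈ I, f j ∈ (∅ : Finset κ)) ∧ ∀ j ∉ I, f j = i₀) = ∅ := by
        ext f
        simp only [Finset.mem_filter, Finset.mem_univ, true_and, Finset.notMem_empty,
          iff_false, not_and]
        intro h
        exact (h j0 hj0).elim
      rw [hfil, Finset.prod_empty, coeff_one, if_neg (fun h => h0 h.symm), Finset.sum_empty]
  | cons i s hi ih =>
    rw [Finset.prod_cons, coeff_mul_ind]
    rw [Finset.sum_congr rfl (fun A (hA : A ∈ I.powerset) => by
      rw [ih (I \ A), Finset.mul_sum])]
    rw [Finset.sum_sigma']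
    refine Finset.sum_bij'
      (fun (a : Σ _ : Finset ι, ι → κ) _ => fun j => if j ∈ a.1 then i else a.2 j)
      (fun (f : ι → κ) _ => (⟨I.filter (fun j => f j = i),
        fun j => if f j = i ∧ j ∈ I then i₀ else f j⟩ : Σ _ : Finset ι, ι → κ))
      ?_ ?_ ?_ ?_ ?_
    · -- maps into FF I (cons i s)
      rintro ⟨A, f⟩ ha
      rw [Finset.mem_sigma, Finset.mem_powerset] at ha
      obtain ⟨hA, hf⟩ := ha
      rw [Finset.mem_filter] at hf ⊢
      refine ⟨Finset.mem_univ _, ?_, ?_⟩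
      · intro j hj
        by_cases hjA : j ∈ A
        · simp [hjA, Finset.mem_cons]
        · simp only [hjA, if_false]
          exact Finset.mem_cons.2 (Or.inr (hf.2.1 j (Finset.mem_sdiff.2 ⟨hj, hjA⟩)))
      · intro j hj
        have hjA : j ∉ A := fun h => hj (hA h)
        simp only [hjA, if_false]
        exact hf.2.2 j (fun h => hj (Finset.mem_sdiff.1 h).1)
    · -- inverse maps into sigma
      intro f hf
      rw [Finset.mem_filter] at hf
      obtain ⟨-, hf1, hf2⟩ := hf
      rw [Finset.mem_sigma, Finset.mem_powerset]
      refine ⟨Finset.filter_subset _ _, ?_⟩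
      rw [Finset.mem_filter]
      refine ⟨Finset.mem_univ _, ?_, ?_⟩
      · intro j hj
        rw [Finset.mem_sdiff, Finset.mem_filter] at hj
        have hji : ¬(f j = i ∧ j ∈ I) := fun h => hj.2 ⟨hj.1, h.1⟩
        simp only [hji, if_false]
        rcases Finset.mem_cons.1 (hf1 j hj.1) with h | h
        · exact absurd ⟨h, hj.1⟩ hji
        · exact h
      · intro j hj
        dsimp only
        by_cases hjI : j ∈ I
        · have hjA : j ∈ I.filter (fun j => f j = i) := by
            by_contra hc
            exact hj (Finset.mem_sdiff.2 ⟨hjI, hc⟩)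
          have hfj : f j = i := (Finset.mem_filter.1 hjA).2
          simp [hfj, hjI]
        · have hji : ¬(f j = i ∧ j ∈ I) := fun h => hjI h.2
          simp only [hji, if_false]
          exact hf2 j hjI
    · -- left inverse
      rintro ⟨A, f⟩ ha
      rw [Finset.mem_sigma, Finset.mem_powerset] at ha
      obtain ⟨hA, hf⟩ := ha
      rw [Finset.mem_filter] at hf
      obtain ⟨-, hf1, hf2⟩ := hf
      have hfil : I.filter (fun j => (if j ∈ A then i else f j) = i) = A := by
        ext j
        rw [Finset.mem_filter]
        constructor
        · rintro ⟨hjI, hj⟩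
          by_contra hjA
          rw [if_neg hjA] at hj
          exact hi (hj ▸ hf1 j (Finset.mem_sdiff.2 ⟨hjI, hjA⟩))
        · intro hjA
          exact ⟨hA hjA, by rw [if_pos hjA]⟩
      refine Sigma.ext hfil (heq_of_eq (funext fun j => ?_))
      dsimp only
      by_cases hjA : j ∈ A
      · rw [if_pos ⟨by rw [if_pos hjA], hA hjA⟩]
        exact (hf2 j (fun h => (Finset.mem_sdiff.1 h).2 hjA)).symm
      · by_cases hjI : j ∈ I
        · have hcond : ¬((if j ∈ A then i else f j) = i ∧ j ∈ I) := by
            rintro ⟨hh, -⟩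
            rw [if_neg hjA] at hh
            exact hi (hh ▸ hf1 j (Finset.mem_sdiff.2 ⟨hjI, hjA⟩))
          rw [if_neg hcond, if_neg hjA]
        · have hcond : ¬((if j ∈ A then i else f j) = i ∧ j ∈ I) := fun h => hjI h.2
          rw [if_neg hcond, if_neg hjA]
    · -- right inverse
      intro f hf
      funext j
      dsimp only
      by_cases hj : j ∈ I.filter (fun j => f j = i)
      · rw [if_pos hj]
        exact ((Finset.mem_filter.1 hj).2).symm
      · rw [if_neg hj]
        rw [Finset.mem_filter] at hj
        have : ¬(f j = i ∧ j ∈ I) := fun h => hj ⟨h.2, h.1⟩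
        rw [if_neg this]
    · -- values agree
      rintro ⟨A, f⟩ ha
      rw [Finset.mem_sigma, Finset.mem_powerset] at ha
      obtain ⟨hA, hf⟩ := ha
      rw [Finset.mem_filter] at hf
      obtain ⟨-, hf1, hf2⟩ := hf
      dsimp only at hA hf1 hf2 ⊢
      rw [Finset.prod_cons]
      have hfil : I.filter (fun j => (if j ∈ A then i else f j) = i) = A := by
        ext j
        rw [Finset.mem_filter]
        constructor
        · rintro ⟨hjI, hj⟩
          by_contra hjA
          rw [if_neg hjA] at hj
          exact hi (hj ▸ hf1 j (Finset.mem_sdiff.2 ⟨hjI, hjA⟩))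
        · intro hjA
          exact ⟨hA hjA, by rw [if_pos hjA]⟩
      rw [hfil]
      congr 1
      refine Finset.prod_congr rfl (fun i' hi' => ?_)
      congr 1
      congr 1
      ext j
      rw [Finset.mem_filter, Finset.mem_filter, Finset.mem_sdiff]
      constructor
      · rintro ⟨⟨hjI, hjA⟩, hj⟩
        exact ⟨hjI, by rw [if_neg hjA]; exact hj⟩
      · rintro ⟨hjI, hj⟩
        by_cases hjA : j ∈ A
        · rw [if_pos hjA] at hj
          exact absurd (hj ▸ hi' : i ∈ s) hi
        · rw [if_neg hjA] at hj
          exact ⟨⟨hjI, hjA⟩, hj⟩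

/-- Special case: full index set. -/
lemma coeff_prod_ind_univ (i₀ : κ) (Q : κ → MvPolynomial ι R) :
    coeff (ind (Finset.univ : Finset ι)) (∏ i, Q i) =
      ∑ f : ι → κ, ∏ i, coeff (ind (Finset.univ.filter (fun j => f j = i))) (Q i) := by
  rw [coeff_prod_ind i₀ Q Finset.univ Finset.univ]
  apply Finset.sum_subset (Finset.filter_subset _ _)
  intro f _ hf
  exact absurd (Finset.mem_filter.2 ⟨Finset.mem_univ _, ⟨fun j _ => Finset.mem_univ _,
    fun j hj => absurd (Finset.mem_univ j) hj⟩⟩) hf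


lemma neg_one_pow_sub (c t : ℕ) (h : t ≤ c) :
    (-1 : R) ^ (c - t) = (-1) ^ c * (-1) ^ t := by
  have hsq : ((-1 : R) ^ t) * ((-1) ^ t) = 1 := by
    rw [← pow_add, ← two_mul, pow_mul, neg_one_sq, one_pow]
  calc (-1 : R) ^ (c - t) = (-1) ^ (c - t) * (((-1) ^ t) * ((-1) ^ t)) := by
        rw [hsq, mul_one]
    _ = ((-1) ^ (c - t) * (-1) ^ t) * (-1) ^ t := by ring
    _ = (-1) ^ c * (-1) ^ t := by rw [← pow_add, Nat.sub_add_cancel h]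

lemma sum_pow_neg_one (x : Finset ι) :
    ∑ m ∈ x.powerset, (-1 : R) ^ m.card = if x = ∅ then 1 else 0 := by
  have h2 := congrArg (fun z : ℤ => (z : R)) (Finset.sum_powerset_neg_one_pow_card (x := x))
  push_cast [apply_ite (fun z : ℤ => (z : R))] at h2
  exact h2

lemma alt_sum_supersets (E : Finset ι) :
    ∑ S : Finset ι, (-1 : R) ^ (Fintype.card ι - S.card) * (if E ⊆ S then 1 else 0)
      = if E = univ then 1 else 0 := by
  rw [Finset.sum_congr rfl (fun S _ => (mul_ite _ _ _ _).trans (by rw [mul_one, mul_zero]))]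
  rw [← Finset.sum_filter]
  have hbij : ∑ S ∈ Finset.univ.filter (fun S : Finset ι => E ⊆ S),
      (-1 : R) ^ (Fintype.card ι - S.card)
      = ∑ T ∈ Eᶜ.powerset, (-1 : R) ^ (Eᶜ.card - T.card) := by
    refine Finset.sum_bij' (fun S _ => S \ E) (fun T _ => T ∪ E) ?_ ?_ ?_ ?_ ?_
    · intro S hS
      rw [Finset.mem_powerset]
      intro j hj
      rw [Finset.mem_compl]
      exact (Finset.mem_sdiff.1 hj).2
    · intro T hT
      rw [Finset.mem_filter]
      exact ⟨Finset.mem_univ _, Finset.subset_union_right⟩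
    · intro S hS
      rw [Finset.mem_filter] at hS
      exact Finset.sdiff_union_of_subset hS.2
    · intro T hT
      rw [Finset.mem_powerset] at hT
      ext a
      simp only [Finset.mem_sdiff, Finset.mem_union]
      constructor
      · rintro ⟨h1 | h1, h2⟩
        · exact h1
        · exact absurd h1 h2
      · intro ha
        exact ⟨Or.inl ha, fun hEa => (Finset.mem_compl.1 (hT ha)) hEa⟩
    · intro S hS
      rw [Finset.mem_filter] at hS
      congr 1
      rw [Finset.card_sdiff_of_subset hS.2, Finset.card_compl]
      have h1 : E.card ≤ S.card := Finset.card_le_card hS.2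
      have h2 : S.card ≤ Fintype.card ι := Finset.card_le_univ S
      omega
  rw [hbij,
    Finset.sum_congr rfl (fun T hT => neg_one_pow_sub _ _
      (Finset.card_le_card (Finset.mem_powerset.1 hT))),
    ← Finset.mul_sum, sum_pow_neg_one]
  by_cases hE : E = univ
  · have h1 : Eᶜ = ∅ := (Finset.compl_eq_empty_iff E).2 hE
    rw [if_pos hE, if_pos h1, h1]
    simp
  · have h1 : Eᶜ ≠ ∅ := fun h => hE ((Finset.compl_eq_empty_iff E).1 h)
    rw [if_neg hE, if_neg h1, mul_zero]

/-- Lemma A: alternating sum of evaluations at 0/1-indicator points extracts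
the coefficient of the full squarefree monomial, for polynomials of total degree
at most the number of variables. -/
lemma sum_eval_indicator (Q : MvPolynomial ι R) (h : Q.totalDegree ≤ Fintype.card ι) :
    ∑ S : Finset ι, (-1 : R) ^ (Fintype.card ι - S.card) *
      eval (fun j => if j ∈ S then (1 : R) else 0) Q = coeff (ind univ) Q := by
  have expand : ∀ S : Finset ι, eval (fun j => if j ∈ S then (1 : R) else 0) Q
      = ∑ d ∈ Q.support, coeff d Q * (if d.support ⊆ S then 1 else 0) := by
    intro S
    conv_lhs => rw [Q.as_sum]
    rw [map_sum]
    refine Finset.sum_congr rfl fun d hd => ?_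
    rw [eval_monomial]
    congr 1
    rw [Finsupp.prod]
    rw [Finset.prod_congr rfl (fun j hj => show
        ((if j ∈ S then (1 : R) else 0) ^ d j) = if j ∈ S then 1 else 0 by
      split
      · exact one_pow _
      · exact zero_pow (Finsupp.mem_support_iff.1 hj))]
    by_cases hds : d.support ⊆ S
    · rw [if_pos hds]
      exact Finset.prod_eq_one (fun j hj => if_pos (hds hj))
    · rw [if_neg hds]
      obtain ⟨j0, hj0, hj0'⟩ := Finset.not_subset.1 hds
      exact Finset.prod_eq_zero hj0 (if_neg hj0')
  calc ∑ S : Finset ι, (-1 : R) ^ (Fintype.card ι - S.card) *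
        eval (fun j => if j ∈ S then (1 : R) else 0) Q
      = ∑ S : Finset ι, ∑ d ∈ Q.support,
          coeff d Q * ((-1 : R) ^ (Fintype.card ι - S.card) *
            (if d.support ⊆ S then 1 else 0)) := by
        refine Finset.sum_congr rfl fun S _ => ?_
        rw [expand S, Finset.mul_sum]
        exact Finset.sum_congr rfl fun d _ => by ring
    _ = ∑ d ∈ Q.support, coeff d Q * ∑ S : Finset ι,
          (-1 : R) ^ (Fintype.card ι - S.card) * (if d.support ⊆ S then 1 else 0) := by
        rw [Finset.sum_comm]
        exact Finset.sum_congr rfl fun d _ => by rw [Finset.mul_sum]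
    _ = ∑ d ∈ Q.support, coeff d Q * (if d = ind univ then 1 else 0) := by
        refine Finset.sum_congr rfl fun d hd => ?_
        rw [alt_sum_supersets]
        congr 1
        by_cases hds : d.support = univ
        · rw [if_pos hds, if_pos]
          -- d = ind univ from degree bound
          have hdeg : ∑ j : ι, d j ≤ Fintype.card ι := by
            have h1 := MvPolynomial.le_totalDegree hd
            have h2 : (d.sum fun _ e => e) = ∑ j : ι, d j := by
              rw [Finsupp.sum, hds]
            omega
          have hone : ∀ j : ι, d j = 1 := by
            by_contra hc
            push_neg at hc
            obtain ⟨j0, hj0⟩ := hc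
            have h1 : ∀ j : ι, 1 ≤ d j := fun j =>
              Nat.one_le_iff_ne_zero.2 (Finsupp.mem_support_iff.1 (hds ▸ Finset.mem_univ j))
            have h2 : ∑ _j : ι, (1 : ℕ) < ∑ j : ι, d j :=
              Finset.sum_lt_sum (fun j _ => h1 j)
                ⟨j0, Finset.mem_univ _, lt_of_le_of_ne (h1 j0) (Ne.symm hj0)⟩
            rw [Finset.sum_const, smul_eq_mul, mul_one] at h2
            have : Finset.univ.card = Fintype.card ι := rfl
            omega
          ext j
          rw [hone j, ind_apply, if_pos (Finset.mem_univ j)]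
        · rw [if_neg hds, if_neg]
          intro hdi
          rw [hdi] at hds
          apply hds
          ext j
          simp [Finsupp.mem_support_iff, ind_apply]
    _ = coeff (ind univ) Q := by
        rw [Finset.sum_congr rfl (fun d _ => mul_ite (d = ind univ) (coeff d Q) 1 0),
          Finset.sum_congr rfl (fun d _ => by rw [mul_one, mul_zero])]
        rw [Finset.sum_ite_eq' Q.support (ind univ) (fun d => coeff d Q)]
        by_cases hmem : ind univ ∈ Q.support
        · rw [if_pos hmem]
        · rw [if_neg hmem]
          exact (MvPolynomial.notMem_support_iff.1 hmem).symm


end SumsetAux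

open Finset SumsetAux MvPolynomial in
theorem sumset_eq_univ_of_coeff_ne_zero (p k : ℕ) (hp : p.Prime) (hk : 1 ≤ k)
    (v : Fin (k * (p - 1)) → (Fin k → ZMod p))
    (hcoef : ∑ f ∈ Finset.univ.filter
        (fun f : Fin (k * (p - 1)) → Fin k =>
          ∀ i : Fin k, (Finset.univ.filter (fun j => f j = i)).card = p - 1),
        ∏ j : Fin (k * (p - 1)), v j (f j) ≠ 0) :
    ∀ x : Fin k → ZMod p, ∃ J : Finset (Fin (k * (p - 1))), ∑ j ∈ J, v j = x := by
  haveI : Fact p.Prime := ⟨hp⟩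
  intro x
  by_contra hno
  push_neg at hno
  have hp1 : 1 ≤ p - 1 := by have := hp.two_le; omega
  -- the polynomial
  set Q : Fin k → MvPolynomial (Fin (k * (p - 1))) (ZMod p) :=
    fun i => 1 - (aff (fun j => v j i) (-(x i))) ^ (p - 1) with hQ
  set P : MvPolynomial (Fin (k * (p - 1))) (ZMod p) := ∏ i : Fin k, Q i with hPdef
  -- coefficient of each factor
  have hcoeffQ : ∀ (i : Fin k) (B : Finset (Fin (k * (p - 1)))),
      coeff (ind B) (Q i) = (if B = ∅ then 1 else 0)
        - ((p - 1).descFactorial B.card : ZMod p) * (-(x i)) ^ (p - 1 - B.card)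
          * ∏ j ∈ B, v j i := by
    intro i B
    rw [hQ]
    simp only
    rw [coeff_sub, coeff_aff_pow, coeff_one]
    congr 1
    rcases eq_or_ne B ∅ with rfl | hB
    · rw [if_pos rfl, if_pos (ind_eq_zero_iff.2 rfl).symm]
    · rw [if_neg hB, if_neg (fun h => hB (ind_eq_zero_iff.1 h.symm))]
  -- Step A : coefficient of the full monomial
  have hfull : coeff (ind Finset.univ) P = ∑ f ∈ Finset.univ.filter
      (fun f : Fin (k * (p - 1)) → Fin k =>
        ∀ i : Fin k, (Finset.univ.filter (fun j => f j = i)).card = p - 1),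
      ∏ j : Fin (k * (p - 1)), v j (f j) := by
    rw [hPdef, coeff_prod_ind_univ ⟨0, hk⟩ Q]
    have hterm : ∀ f : Fin (k * (p - 1)) → Fin k,
        ∏ i : Fin k, coeff (ind (Finset.univ.filter (fun j => f j = i))) (Q i)
          = if (∀ i : Fin k, (Finset.univ.filter (fun j => f j = i)).card = p - 1)
              then ∏ j : Fin (k * (p - 1)), v j (f j) else 0 := by
      intro f
      by_cases hgood : ∀ i : Fin k, (Finset.univ.filter (fun j => f j = i)).card = p - 1
      · rw [if_pos hgood]
        have hfactor : ∀ i : Fin k,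
            coeff (ind (Finset.univ.filter (fun j => f j = i))) (Q i)
              = ∏ j ∈ Finset.univ.filter (fun j => f j = i), v j i := by
          intro i
          rw [hcoeffQ i]
          rw [if_neg (by
            intro h
            have := hgood i
            rw [h, Finset.card_empty] at this
            omega)]
          rw [hgood i, Nat.descFactorial_self, Nat.sub_self, pow_zero, ZMod.wilsons_lemma]
          ring
        rw [Finset.prod_congr rfl (fun i _ => hfactor i)]
        have hfib : ∀ i : Fin k, ∏ j ∈ Finset.univ.filter (fun j => f j = i), v j i
            = ∏ j ∈ Finset.univ.filter (fun j => f j = i), v j (f j) :=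
          fun i => Finset.prod_congr rfl (fun j hj => by rw [(Finset.mem_filter.1 hj).2])
        rw [Finset.prod_congr rfl (fun i _ => hfib i)]
        exact Finset.prod_fiberwise Finset.univ f (fun j => v j (f j))
      · rw [if_neg hgood]
        push_neg at hgood
        obtain ⟨i0, hi0⟩ := hgood
        have hsumcard : ∑ i : Fin k, (Finset.univ.filter (fun j => f j = i)).card = k * (p - 1) := by
          rw [← Finset.card_eq_sum_card_fiberwise (fun j (_ : j ∈ (Finset.univ : Finset (Fin (k * (p - 1))))) =>
            Finset.mem_univ (f j))]
          simp
        have hbig : ∃ i1 : Fin k, p - 1 < (Finset.univ.filter (fun j => f j = i1)).card := by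
          by_contra hall
          push_neg at hall
          have hlt : ∑ i : Fin k, (Finset.univ.filter (fun j => f j = i)).card
              < ∑ _i : Fin k, (p - 1) :=
            Finset.sum_lt_sum (fun i _ => hall i)
              ⟨i0, Finset.mem_univ _, lt_of_le_of_ne (hall i0) hi0⟩
          rw [Finset.sum_const, smul_eq_mul, Finset.card_univ, Fintype.card_fin] at hlt
          omega
        obtain ⟨i1, hi1⟩ := hbig
        refine Finset.prod_eq_zero (Finset.mem_univ i1) ?_
        rw [hcoeffQ i1]
        rw [if_neg (by
          intro h
          rw [h, Finset.card_empty] at hi1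
          omega)]
        rw [Nat.descFactorial_eq_zero_iff_lt.2 hi1]
        push_cast
        ring
    rw [Finset.sum_congr rfl (fun f _ => hterm f), ← Finset.sum_filter]
  -- Step B : total degree bound
  have hdeg : P.totalDegree ≤ Fintype.card (Fin (k * (p - 1))) := by
    rw [Fintype.card_fin]
    refine le_trans (totalDegree_finset_prod _ _) ?_
    have hQdeg : ∀ i : Fin k, (Q i).totalDegree ≤ p - 1 := by
      intro i
      rw [hQ]
      simp only
      refine le_trans (totalDegree_sub _ _) (max_le (by rw [totalDegree_one]; omega) ?_)
      refine le_trans (totalDegree_pow _ _) ?_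
      have haffdeg : (aff (fun j => v j i) (-(x i))).totalDegree ≤ 1 := by
        rw [aff]
        refine le_trans (totalDegree_add _ _) (max_le ?_ (by rw [totalDegree_C]; omega))
        refine MvPolynomial.totalDegree_finsetSum_le (fun j _ => ?_)
        exact le_trans (totalDegree_mul _ _) (by
          rw [totalDegree_C]
          simpa using (totalDegree_X (R := ZMod p) j).le)
      calc (p - 1) * (aff (fun j => v j i) (-(x i))).totalDegree ≤ (p - 1) * 1 :=
            Nat.mul_le_mul_left _ haffdeg
        _ = p - 1 := by omega
    calc ∑ i : Fin k, (Q i).totalDegree ≤ ∑ _i : Fin k, (p - 1) :=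
          Finset.sum_le_sum (fun i _ => hQdeg i)
      _ = k * (p - 1) := by rw [Finset.sum_const, smul_eq_mul, Finset.card_univ, Fintype.card_fin]
  -- Step C : all indicator evaluations vanish
  have heval : ∀ S : Finset (Fin (k * (p - 1))),
      eval (fun j => if j ∈ S then (1 : ZMod p) else 0) P = 0 := by
    intro S
    have hx : (∑ j ∈ S, v j) ≠ x := hno S
    have hexists : ∃ i : Fin k, (∑ j ∈ S, v j i) - x i ≠ 0 := by
      by_contra hall
      push_neg at hall
      apply hx
      funext i
      have := hall i
      rw [sub_eq_zero] at this
      rw [← this, Finset.sum_apply]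
    obtain ⟨i, hi⟩ := hexists
    rw [hPdef, map_prod]
    refine Finset.prod_eq_zero (Finset.mem_univ i) ?_
    rw [hQ]
    simp only [map_sub, map_one, map_pow]
    have haff : eval (fun j => if j ∈ S then (1 : ZMod p) else 0)
        (aff (fun j => v j i) (-(x i))) = (∑ j ∈ S, v j i) - x i := by
      rw [aff]
      simp only [eval_add, eval_C, map_sum, eval_mul, eval_X]
      rw [Finset.sum_congr rfl (fun j _ => mul_ite (j ∈ S) (v j i) 1 0),
        Finset.sum_congr rfl (fun j _ => by rw [mul_one, mul_zero]),
        Finset.sum_ite_mem, Finset.univ_inter, sub_eq_add_neg]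
    rw [haff, ZMod.pow_card_sub_one_eq_one hi, sub_self]
  -- conclude
  have hzero : coeff (ind Finset.univ) P = 0 := by
    rw [← sum_eval_indicator P hdeg]
    rw [Finset.sum_congr rfl (fun S _ => by rw [heval S, mul_zero])]
    rw [Finset.sum_const, smul_zero]
  rw [hfull] at hzero
  exact hcoef hzero
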